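/- Let m ≥ 2 be an integer, ω = exp(2πi/m), and n a positive integer. Then ∑_{ℓ=1}^{m−1} ω^{ℓn}/(1 − ω^ℓ)² = −(m²/2) · ( B₂({(n−1)/m}) − 1/(6m²) ), where B₂(x) = x² − x + 1/6 is the second Bernoulli polynomial and {x} denotes the fractional part of x. -/

import Mathlib

open Finset

lemma modfact (m a : ℕ) (h : a < 2*m) : a % m = 0 ↔ (a = 0 ∨ a = m) := by
  rcases lt_or_ge a m with h1 | h1
  · rw [Nat.mod_eq_of_lt h1]; omega
  · rw [Nat.mod_eq_sub_mod h1, Nat.mod_eq_of_lt (by omega)]; omega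

lemma sum_cast_range (m : ℕ) : ∑ j ∈ range m, (j:ℂ) = (m:ℂ)*((m:ℂ)-1)/2 := by
  induction m with
  | zero => simp
  | succ m ih => rw [sum_range_succ, ih]; push_cast; ring

lemma sum_sq_range (m : ℕ) : ∑ j ∈ range m, (j:ℂ)^2 = (m:ℂ)*((m:ℂ)-1)*(2*(m:ℂ)-1)/6 := by
  induction m with
  | zero => simp
  | succ m ih => rw [sum_range_succ, ih]; push_cast; ring

lemma sum_c (m : ℕ) : ∑ j ∈ range m, (j:ℂ)*((m:ℂ)-(j:ℂ)) = (m:ℂ)*((m:ℂ)^2-1)/6 := by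
  have h : ∀ j ∈ range m, (j:ℂ)*((m:ℂ)-(j:ℂ)) = (m:ℂ)*(j:ℂ) - (j:ℂ)^2 := by
    intro j _; ring
  rw [sum_congr rfl h, Finset.sum_sub_distrib, ← Finset.mul_sum, sum_cast_range, sum_sq_range]
  ring

lemma geomB (x : ℂ) (m : ℕ) : (x-1)^2 * ∑ j ∈ range m, (j:ℂ) * x^j
    = ((m:ℂ)-1)*x^(m+1) - (m:ℂ)*x^m + x := by
  induction m with
  | zero => simp
  | succ m ih =>
    rw [sum_range_succ, mul_add, ih]; push_cast; ring

lemma star (x : ℂ) (m : ℕ) : (x-1)^2 * ∑ j ∈ range m, (j:ℂ)*((m:ℂ)-(j:ℂ)) * x^j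
    = ((m:ℂ)+1)*x - 2*x*(∑ j ∈ range m, x^j) + ((m:ℂ)-1)*x^m*x := by
  induction m with
  | zero => simp
  | succ m ih =>
    have h : ∀ j ∈ range m, (j:ℂ)*(((m:ℕ):ℂ)+1-(j:ℂ)) * x^j
        = (j:ℂ)*((m:ℂ)-(j:ℂ)) * x^j + (j:ℂ)*x^j := by intro j _; ring
    rw [sum_range_succ, sum_range_succ]
    push_cast
    rw [sum_congr rfl h, Finset.sum_add_distrib]
    have hB := geomB x m
    linear_combination ih + hB

lemma keyx (m : ℕ) (x : ℂ) (hx : x ≠ 1) (hxm : x^m = 1) :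
    (x-1)^2 * ∑ j ∈ range m, (j:ℂ)*((m:ℂ)-(j:ℂ))*x^j = 2*(m:ℂ)*x := by
  have hx1 : x - 1 ≠ 0 := sub_ne_zero.mpr hx
  have hG : ∑ j ∈ range m, x^j = 0 := by
    have h := geom_sum_mul x m
    rw [hxm, sub_self] at h
    exact (mul_eq_zero.mp h).resolve_right hx1
  rw [star, hG, hxm]; ring

-- geometric sum over Icc 1 (m-1)
lemma Ticc (m : ℕ) (hm : 2 ≤ m) (ω : ℂ) (hprim : IsPrimitiveRoot ω m) (t : ℕ) :
    ∑ ℓ ∈ Icc 1 (m-1), (ω^t)^ℓ = (if m ∣ t then (m:ℂ) else 0) - 1 := by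
  have hicc : Icc 1 (m-1) = (range m).erase 0 := by
    ext a; simp only [mem_Icc, mem_erase, mem_range]; omega
  have h0 : (0:ℕ) ∈ range m := by simp; omega
  rw [hicc, Finset.sum_erase_eq_sub h0, pow_zero]
  congr 1
  by_cases hd : m ∣ t
  · have : ω^t = 1 := (hprim.pow_eq_one_iff_dvd t).mpr hd
    simp [this, hd]
  · have hy : ω^t ≠ 1 := fun h => hd ((hprim.pow_eq_one_iff_dvd t).mp h)
    have hym : (ω^t)^m = 1 := by
      rw [← pow_mul, mul_comm, pow_mul, hprim.pow_eq_one, one_pow]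
    have h := geom_sum_mul (ω^t) m
    rw [hym, sub_self] at h
    simp [hd, (mul_eq_zero.mp h).resolve_right (sub_ne_zero.mpr hy)]


/-- Let `m ≥ 2`, `ω = exp(2πi/m)`, and let `n` be a positive integer.
Then `∑_{ℓ=1}^{m-1} ω^{ℓn} / (1 - ω^ℓ)² = -(m²/2) (B₂({(n-1)/m}) - 1/(6m²))`, where
`B₂(x) = x² - x + 1/6` and `{x}` is the fractional part of `x`. -/
theorem stmt13 (m : ℕ) (hm : 2 ≤ m) (n : ℕ) (hn : 0 < n) :
    ∑ ℓ ∈ Finset.Icc 1 (m - 1),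
        Complex.exp (2 * Real.pi * Complex.I / m) ^ (ℓ * n) /
          (1 - Complex.exp (2 * Real.pi * Complex.I / m) ^ ℓ) ^ 2
      = ((-(((m : ℝ)) ^ 2 / 2) *
          ((Int.fract (((n : ℝ) - 1) / m)) ^ 2 - Int.fract (((n : ℝ) - 1) / m) + 1 / 6
            - 1 / (6 * (m : ℝ) ^ 2)) : ℝ) : ℂ) := by
  have hm0 : m ≠ 0 := by omega
  set ω := Complex.exp (2 * Real.pi * Complex.I / m) with hω
  have hprim : IsPrimitiveRoot ω m := Complex.isPrimitiveRoot_exp m hm0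
  set N := n - 1 with hN
  have hnN : n = N + 1 := by omega
  set k := N % m with hk
  have hkm : k < m := Nat.mod_lt _ (by omega)
  have hmC : (m:ℂ) ≠ 0 := Nat.cast_ne_zero.mpr hm0
  have hmR : (m:ℝ) ≠ 0 := Nat.cast_ne_zero.mpr hm0
  -- Step 1: per-term expansion
  have step1 : ∀ ℓ ∈ Icc 1 (m-1),
      ω ^ (ℓ * n) / (1 - ω ^ ℓ)^2
      = ∑ j ∈ range m, (j:ℂ)*((m:ℂ)-(j:ℂ)) * (ω^(N+j))^ℓ / (2*(m:ℂ)) := by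
    intro ℓ hℓ
    simp only [mem_Icc] at hℓ
    have hℓm : ℓ < m := by omega
    have hx1 : ω ^ ℓ ≠ 1 := hprim.pow_ne_one_of_pos_of_lt (by omega) hℓm
    have hxm : (ω ^ ℓ) ^ m = 1 := by
      rw [← pow_mul, mul_comm, pow_mul, hprim.pow_eq_one, one_pow]
    have hx1' : (ω ^ ℓ) - 1 ≠ 0 := sub_ne_zero.mpr hx1
    have hx1'' : 1 - (ω ^ ℓ) ≠ 0 := sub_ne_zero.mpr (Ne.symm hx1)
    have hkey := keyx m (ω ^ ℓ) hx1 hxm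
    have hrw : ∀ j, (ω^(N+j))^ℓ = (ω^ℓ)^N * (ω^ℓ)^j := by
      intro j; rw [← pow_mul, mul_comm, pow_mul, pow_add]
    have hxn : ω ^ (ℓ * n) = (ω^ℓ)^N * (ω^ℓ) := by
      rw [pow_mul, hnN, pow_succ]
    simp only [hrw, hxn]
    rw [← Finset.sum_div]
    have hsum : ∑ j ∈ range m, (j:ℂ)*((m:ℂ)-(j:ℂ)) * ((ω^ℓ)^N * (ω^ℓ)^j)
        = (ω^ℓ)^N * ∑ j ∈ range m, (j:ℂ)*((m:ℂ)-(j:ℂ)) * (ω^ℓ)^j := by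
      rw [Finset.mul_sum]; exact sum_congr rfl (fun j _ => by ring)
    rw [hsum]
    field_simp
    linear_combination (-(ω^ℓ)^N) * hkey
  rw [Finset.sum_congr rfl step1, Finset.sum_comm]
  -- Step 2: inner sums
  have step2 : ∀ j ∈ range m,
      ∑ ℓ ∈ Icc 1 (m-1), (j:ℂ)*((m:ℂ)-(j:ℂ)) * (ω^(N+j))^ℓ / (2*(m:ℂ))
      = (j:ℂ)*((m:ℂ)-(j:ℂ)) * ((if m ∣ N+j then (m:ℂ) else 0) - 1) / (2*(m:ℂ)) := by
    intro j _
    rw [← Finset.sum_div, ← Finset.mul_sum, Ticc m hm ω hprim (N+j)]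
  rw [Finset.sum_congr rfl step2]
  -- Step 3: evaluate the indicator sum
  set j0 := (m - k) % m with hj0
  have hj0m : j0 < m := Nat.mod_lt _ (by omega)
  have hiff : ∀ j ∈ range m, (m ∣ N + j) ↔ j = j0 := by
    intro j hj
    rw [mem_range] at hj
    rw [Nat.dvd_iff_mod_eq_zero, Nat.add_mod, ← hk, Nat.mod_eq_of_lt hj,
      modfact m (k+j) (by omega)]
    rcases Nat.eq_zero_or_pos k with h0 | h0
    · have : j0 = 0 := by simp [hj0, h0]
      omega
    · have : j0 = m - k := by rw [hj0, Nat.mod_eq_of_lt (by omega)]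
      omega
  have hsplit : ∀ j ∈ range m,
      (j:ℂ)*((m:ℂ)-(j:ℂ)) * ((if m ∣ N+j then (m:ℂ) else 0) - 1) / (2*(m:ℂ))
      = ((if j = j0 then (j:ℂ)*((m:ℂ)-(j:ℂ))*(m:ℂ) else 0)
          - (j:ℂ)*((m:ℂ)-(j:ℂ))) / (2*(m:ℂ)) := by
    intro j hj
    rw [if_congr (hiff j hj) rfl rfl]
    by_cases h : j = j0
    · rw [if_pos h, if_pos h]; ring
    · rw [if_neg h, if_neg h]; ring
  rw [Finset.sum_congr rfl hsplit, ← Finset.sum_div, Finset.sum_sub_distrib,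
    Finset.sum_ite_eq' (range m) j0, if_pos (mem_range.mpr hj0m), sum_c]
  -- value of c_{j0}
  have hc : (j0:ℂ)*((m:ℂ)-(j0:ℂ)) = (k:ℂ)*((m:ℂ)-(k:ℂ)) := by
    rcases Nat.eq_zero_or_pos k with h0 | h0
    · have : j0 = 0 := by simp [hj0, h0]
      rw [this, h0]
    · have hj0v : j0 = m - k := by rw [hj0, Nat.mod_eq_of_lt (by omega)]
      rw [hj0v, Nat.cast_sub (by omega)]; ring
  rw [hc]
  -- Step 4: fract value
  have hfr : Int.fract (((n:ℝ) - 1) / m) = (k:ℝ)/m := by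
    have h1 : ((n:ℝ) - 1) = (N:ℝ) := by rw [hnN]; push_cast; ring
    have h2 : (N:ℝ) = m*(N/m : ℕ) + k := by
      rw [hk]; exact_mod_cast (Nat.div_add_mod N m).symm
    have h3 : ((n:ℝ) - 1)/m = (N/m : ℕ) + (k:ℝ)/m := by
      rw [h1, h2]; field_simp
    rw [h3, Int.fract_natCast_add, Int.fract_eq_self.mpr]
    constructor
    · positivity
    · rw [div_lt_one (by positivity)]; exact_mod_cast hkm
  have hR : ((-(((m:ℝ))^2/2) * (((k:ℝ)/m)^2 - (k:ℝ)/m + 1/6 - 1/(6*(m:ℝ)^2))) : ℝ)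
      = ((k:ℝ)*((m:ℝ)-(k:ℝ))*(m:ℝ) - (m:ℝ)*((m:ℝ)^2-1)/6)/(2*(m:ℝ)) := by
    field_simp
    ring
  rw [hfr, hR]
  push_cast
  ring
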